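/- arXiv:2308.04609 — 2 statements merged into one kernel-verified Lean document; each statement's English description precedes it below -/
import Mathlib

section
/- For k = 2 the weak and strong notions coincide: a pair (X, d) with X finite and d : X² → ℝ is a pseudo 2-metric space (i.e., a finite pseudometric space, where the simplex inequality is the triangle inequality) if and only if it is a strong pseudo 2-metric space. In particular, every finite pseudometric satisfies the strong simplex inequality: for all s, t ∈ X and every 1-chain α on X with ∂α = ∂1_{(s,t)} (i.e., α is a unit (s,t)-flow), d(s,t) ≤ Σ_τ |α(τ)|·d(τ), the sum over all 2-element subsets τ of X. -/
open scoped BigOperators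

/-- An alternating real-valued function on `j`-tuples of `X`
(a `(j-1)`-dimensional chain on the complete complex on `X`). -/
def AltChain {X : Type*} {j : ℕ} (α : (Fin j → X) → ℝ) : Prop :=
  ∀ (π : Equiv.Perm (Fin j)) (x : Fin j → X),
    α (x ∘ π) = ((Equiv.Perm.sign π : ℤ) : ℝ) * α x

/-- The boundary operator: `(∂α)(y₁,…,y_j) = ∑_{x ∈ X} α(x, y₁, …, y_j)`. -/
noncomputable def bdry {X : Type*} [Fintype X] {j : ℕ}
    (α : (Fin (j + 1) → X) → ℝ) : (Fin j → X) → ℝ :=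
  fun y => ∑ x : X, α (Fin.cons x y)

/-- The elementary chain `1_t`: value `sign π` on the reordering of `t` by `π`,
and `0` on all other tuples. -/
noncomputable def unitChain {X : Type*} [DecidableEq X] {j : ℕ} (t : Fin j → X) :
    (Fin j → X) → ℝ :=
  fun s => ∑ π : Equiv.Perm (Fin j),
    if s = t ∘ π then ((Equiv.Perm.sign π : ℤ) : ℝ) else 0

/-- The coboundary operator:
`(δf)(x₁,…,x_{j+2}) = ∑ᵢ (-1)^(i+1) f(x₁,…,x̂ᵢ,…,x_{j+2})` (`0`-indexed sign `(-1)^i`). -/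
noncomputable def cobdry {X : Type*} {j : ℕ}
    (f : (Fin (j + 1) → X) → ℝ) : (Fin (j + 2) → X) → ℝ :=
  fun x => ∑ i : Fin (j + 2), (-1 : ℝ) ^ (i : ℕ) * f (x ∘ i.succAbove)

/-- A pseudo metric of arity `K` (a pseudo `K`-metric): nonnegative, vanishing on
non-injective tuples, permutation invariant, satisfying the simplex inequality. -/
structure IsPseudoMetric {X : Type*} (K : ℕ) (d : (Fin K → X) → ℝ) : Prop where
  nonneg : ∀ x, 0 ≤ d x
  eq_zero : ∀ x, ¬ Function.Injective x → d x = 0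
  perm : ∀ (π : Equiv.Perm (Fin K)) (x), d (x ∘ π) = d x
  simplex : ∀ (x : Fin K → X) (y : X),
    d x ≤ ∑ i : Fin K, d (Function.update x i y)

/-- A strong pseudo metric of arity `k + 1` (a strong pseudo `(k+1)`-metric).
The strong simplex inequality `d t ≤ ∑_τ |α(τ)| * d(τ)` (with the sum over
`(k+1)`-element subsets `τ` of `X`, each evaluated on any fixed ordering of `τ`)
is stated in the equivalent form `(k+1)! * d t ≤ ∑_s |α(s)| * d(s)` with the sum
over all `(k+1)`-tuples `s`: since `α` is alternating and `d` is permutation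
invariant, the summand depends only on the underlying set of `s` (it vanishes on
tuples with repeated entries), and each `(k+1)`-element subset has exactly
`(k+1)!` orderings. -/
structure IsStrongPseudoMetric {X : Type*} [Fintype X] [DecidableEq X] (k : ℕ)
    (d : (Fin (k + 1) → X) → ℝ) : Prop where
  nonneg : ∀ x, 0 ≤ d x
  eq_zero : ∀ x, ¬ Function.Injective x → d x = 0
  perm : ∀ (π : Equiv.Perm (Fin (k + 1))) (x), d (x ∘ π) = d x
  strong_simplex : ∀ t : Fin (k + 1) → X, Function.Injective t →
    ∀ α : (Fin (k + 1) → X) → ℝ, AltChain α → bdry α = bdry (unitChain t) →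
      ((k + 1).factorial : ℝ) * d t ≤ ∑ s : Fin (k + 1) → X, |α s| * d s

/-- `(X, d)` is a coboundary metric of arity `k + 2` in `m` dimensions with respect
to the norm `ν` on `ℝ^m`: there are chains `f 1, …, f m` on `(k+1)`-tuples (i.e.
`(k+2)-2`-dimensional chains for arity `k+2`) whose simultaneous coboundary
realizes `d` on injective tuples, and `d` vanishes on non-injective tuples. -/
def IsCoboundaryMetric {X : Type*} (k m : ℕ) (ν : (Fin m → ℝ) → ℝ)
    (d : (Fin (k + 2) → X) → ℝ) : Prop :=
  ∃ f : Fin m → ((Fin (k + 1) → X) → ℝ),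
    (∀ i, AltChain (f i)) ∧
    (∀ x, Function.Injective x → d x = ν (fun i => cobdry (f i) x)) ∧
    (∀ x, ¬ Function.Injective x → d x = 0)

/-- `ν` is a norm on `ℝ^m`. -/
structure IsNorm {m : ℕ} (ν : (Fin m → ℝ) → ℝ) : Prop where
  nonneg : ∀ x, 0 ≤ ν x
  eq_zero_iff : ∀ x, ν x = 0 ↔ x = 0
  homog : ∀ (c : ℝ) (x), ν (c • x) = |c| * ν x
  triangle : ∀ x y, ν (x + y) ≤ ν x + ν y

/-- The `ℓ_p` norm on `ℝ^m` for real `p`. -/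
noncomputable def lpNorm (p : ℝ) {m : ℕ} (x : Fin m → ℝ) : ℝ :=
  (∑ i, |x i| ^ p) ^ (1 / p)

/-- The `ℓ_1` norm on `ℝ^m`. -/
noncomputable def l1Norm {m : ℕ} (x : Fin m → ℝ) : ℝ := ∑ i, |x i|

/-- The `ℓ_2` (Euclidean) norm on `ℝ^m`. -/
noncomputable def l2Norm {m : ℕ} (x : Fin m → ℝ) : ℝ := Real.sqrt (∑ i, x i ^ 2)

/-- The `ℓ_∞` norm on `ℝ^m` (the sup norm, which is the norm of `Fin m → ℝ`). -/
noncomputable def linfNorm {m : ℕ} (x : Fin m → ℝ) : ℝ := ‖x‖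

/- The apex extension of `d` (of arity `K`), with the apex being
`none : Option X` (a new element not in `X`): on an injective `(K+1)`-tuple
containing the apex in position `i` it is `d` of the tuple with position `i`
removed, and it is `0` on all other tuples. -/
open Classical in
noncomputable def apexExt {X : Type*} {K : ℕ} (d : (Fin K → X) → ℝ) :
    (Fin (K + 1) → Option X) → ℝ := fun x =>
  if h : Function.Injective x ∧ ∃ i, x i = none then
    d (fun j =>
      Option.get (x ((Classical.choose h.2).succAbove j))
        (by
          rw [Option.isSome_iff_ne_none]
          intro hnone
          exact Fin.succAbove_ne (Classical.choose h.2) j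
            (h.1 (hnone.trans (Classical.choose_spec h.2).symm))))
  else 0

/-- The `K`-dimensional volume of the simplex with vertices `y 0, …, y K` in `ℝ^m`:
`(1/K!) * √(det (AᵀA))` where `A` is the `m × K` matrix with columns
`y i - y 0`, `i = 1, …, K`. -/
noncomputable def simplexVolume {m K : ℕ} (y : Fin (K + 1) → (Fin m → ℝ)) : ℝ :=
  (1 / (K.factorial : ℝ)) *
    Real.sqrt
      (Matrix.det
        (Matrix.of fun i j : Fin K =>
          ∑ l : Fin m, (y i.succ l - y 0 l) * (y j.succ l - y 0 l)))


section StrongHelpers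

variable {X : Type*}

private lemma unitChain_apply [DecidableEq X] (t s : Fin 2 → X) :
    unitChain t s = (if s = t then (1:ℝ) else 0) +
      (if s = t ∘ (Equiv.swap 0 1 : Equiv.Perm (Fin 2)) then (-1:ℝ) else 0) := by
  have h : (Finset.univ : Finset (Equiv.Perm (Fin 2))) = {1, Equiv.swap 0 1} := by decide
  rw [unitChain, h, Finset.sum_insert (by decide), Finset.sum_singleton]
  simp [Equiv.Perm.sign_swap (by decide : (0:Fin 2) ≠ 1)]

private lemma eta2 (s : Fin 2 → X) : s = ![s 0, s 1] := by
  funext i; fin_cases i <;> rfl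

private lemma pair_eq (a b p q : X) : (![a,b] = ![p,q]) ↔ a = p ∧ b = q := by
  constructor
  · intro h; exact ⟨congrFun h 0, congrFun h 1⟩
  · rintro ⟨rfl, rfl⟩; rfl

private lemma comp_swap (a b : X) :
    ![a,b] ∘ (Equiv.swap (0:Fin 2) 1 : Equiv.Perm (Fin 2)) = ![b,a] := by
  funext i; fin_cases i <;> simp

private lemma cons_pair (x : X) (z : Fin 1 → X) : Fin.cons x z = ![x, z 0] := by
  funext i; fin_cases i <;> rfl

private lemma pair_inj {a b : X} (h : a ≠ b) : Function.Injective ![a,b] := by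
  intro i j hij
  fin_cases i <;> fin_cases j <;> simp_all

private lemma altChain_unitChain [DecidableEq X] {j : ℕ} (t : Fin j → X) :
    AltChain (unitChain t) := by
  intro σ x
  rw [unitChain, unitChain, Finset.mul_sum]
  refine Fintype.sum_equiv (Equiv.mulRight σ⁻¹) _ _ (fun π => ?_)
  simp only [Equiv.coe_mulRight]
  have hcond : (x ∘ ⇑σ = t ∘ ⇑π) ↔ (x = t ∘ ⇑(π * σ⁻¹)) := by
    constructor
    · intro h; funext i
      have := congrFun h (σ⁻¹ i)
      simpa using this
    · intro h; funext i
      have := congrFun h (σ i)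
      simpa using this
  by_cases h : x ∘ ⇑σ = t ∘ ⇑π
  · show _ = _ * (if x = t ∘ ⇑(π * σ⁻¹) then _ else _)
    rw [if_pos h, if_pos (hcond.mp h)]
    have hs : Equiv.Perm.sign (π * σ⁻¹) = Equiv.Perm.sign π * Equiv.Perm.sign σ := by
      simp [Equiv.Perm.sign_mul]
    rw [hs]
    rcases Int.units_eq_one_or (Equiv.Perm.sign σ) with h1 | h1 <;>
      rcases Int.units_eq_one_or (Equiv.Perm.sign π) with h2 | h2 <;>
      simp [h1, h2]
  · show _ = _ * (if x = t ∘ ⇑(π * σ⁻¹) then _ else _)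
    rw [if_neg h, if_neg (fun hh => h (hcond.mpr hh)), mul_zero]

private lemma sum_ind [Fintype X] [DecidableEq X] (a : X) (c : Prop) [Decidable c] :
    ∑ x : X, (if x = a ∧ c then (1:ℝ) else 0) = if c then 1 else 0 := by
  by_cases hc : c <;> simp [hc]

private lemma bdry_unitChain_pair [Fintype X] [DecidableEq X] (p q z0 : X) :
    ∑ x : X, unitChain ![p,q] ![x, z0]
      = (if z0 = q then (1:ℝ) else 0) - (if z0 = p then 1 else 0) := by
  have hx : ∀ x : X, unitChain ![p,q] ![x, z0]
      = (if x = p ∧ z0 = q then (1:ℝ) else 0) - (if x = q ∧ z0 = p then 1 else 0) := by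
    intro x
    rw [unitChain_apply, comp_swap]
    simp only [pair_eq]
    split_ifs <;> ring
  simp only [hx]
  rw [Finset.sum_sub_distrib, sum_ind, sum_ind]

private lemma bdry_unitChain_eval [Fintype X] [DecidableEq X] (t : Fin 2 → X) (z0 : X) :
    ∑ x : X, unitChain t ![x, z0]
      = (if z0 = t 1 then (1:ℝ) else 0) - (if z0 = t 0 then 1 else 0) := by
  have h := bdry_unitChain_pair (t 0) (t 1) z0
  rw [← eta2 t] at h
  exact h

private lemma sum_pairs [Fintype X] (g : (Fin 2 → X) → ℝ) :
    ∑ s : Fin 2 → X, g s = ∑ x : X, ∑ y : X, g ![x,y] := by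
  calc ∑ s : Fin 2 → X, g s = ∑ p : X × X, g ![p.1, p.2] := by
        refine Fintype.sum_equiv (piFinTwoEquiv fun _ => X) _ _ (fun s => ?_)
        congr 1
        funext i; fin_cases i <;> rfl
    _ = ∑ x : X, ∑ y : X, g ![x,y] := Fintype.sum_prod_type _

private lemma sum_abs_unitChain [Fintype X] [DecidableEq X] {d : (Fin 2 → X) → ℝ}
    (hperm : ∀ (π : Equiv.Perm (Fin 2)) (x), d (x ∘ π) = d x)
    (t : Fin 2 → X) (ht : Function.Injective t) :
    ∑ s : Fin 2 → X, |unitChain t s| * d s = 2 * d t := by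
  have hne : t ≠ t ∘ (Equiv.swap 0 1 : Equiv.Perm (Fin 2)) := by
    intro h
    have h0 := congrFun h 0
    simp only [Function.comp_apply, Equiv.swap_apply_left] at h0
    exact (by decide : (0 : Fin 2) ≠ 1) (ht h0)
  rw [Finset.sum_eq_add_of_mem t (t ∘ (Equiv.swap 0 1 : Equiv.Perm (Fin 2)))
    (Finset.mem_univ _) (Finset.mem_univ _) hne ?_]
  · rw [unitChain_apply, unitChain_apply]
    rw [if_pos rfl, if_neg hne, if_neg (fun h => hne h.symm), if_pos rfl]
    have hd : d (t ∘ (Equiv.swap 0 1 : Equiv.Perm (Fin 2))) = d t := hperm _ t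
    rw [hd]
    norm_num
    ring
  · intro c _ hc
    rw [unitChain_apply, if_neg hc.1, if_neg hc.2]
    norm_num

end StrongHelpers

/-- for `k = 2` the weak and strong notions coincide: `(X, d)` is a
pseudo 2-metric (a finite pseudometric) iff it is a strong pseudo 2-metric. -/
theorem stmt_2 {X : Type*} [Fintype X] [DecidableEq X] (d : (Fin 2 → X) → ℝ) :
    IsPseudoMetric 2 d ↔ IsStrongPseudoMetric 1 d := by
  constructor
  · intro hd
    refine ⟨hd.nonneg, hd.eq_zero, hd.perm, ?_⟩
    intro t ht α hα hb
    show ((1 + 1).factorial : ℝ) * d t ≤ ∑ s : Fin 2 → X, |α s| * d s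
    set f : X → ℝ := fun z => d ![z, t 1] with hf
    -- Lipschitz property
    have lip : ∀ s : Fin 2 → X, |f (s 0) - f (s 1)| ≤ d s := by
      intro s
      have tri : ∀ a b : X, f a ≤ f b + d ![b, a] := by
        intro a b
        have h := hd.simplex ![a, t 1] b
        rw [Fin.sum_univ_two] at h
        have h0 : Function.update ![a, t 1] 0 b = ![b, t 1] := by
          funext i; fin_cases i <;> simp
        have h1 : Function.update ![a, t 1] 1 b = ![a, b] := by
          funext i; fin_cases i <;> simp
        rw [h0, h1] at h
        have hab : d ![a, b] = d ![b, a] := by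
          rw [← comp_swap b a, hd.perm]
        calc f a = d ![a, t 1] := rfl
          _ ≤ d ![b, t 1] + d ![a, b] := h
          _ = f b + d ![b, a] := by rw [hab]
      have hds : d s = d ![s 0, s 1] := by rw [← eta2]
      rw [abs_sub_le_iff]
      constructor
      · have h := tri (s 0) (s 1)
        have hsw : d ![s 1, s 0] = d ![s 0, s 1] := by
          rw [← comp_swap (s 0) (s 1), hd.perm]
        rw [hsw, ← hds] at h
        linarith
      · have h := tri (s 1) (s 0)
        rw [← hds] at h
        linarith
    have hft1 : f (t 1) = 0 := by
      apply hd.eq_zero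
      intro h
      have he : (![t 1, t 1] : Fin 2 → X) 0 = ![t 1, t 1] 1 := rfl
      exact (by decide : (0 : Fin 2) ≠ 1) (h he)
    have hft0 : f (t 0) = d t := by
      rw [hf]; exact (congrArg d (eta2 t)).symm
    have hT1 : ∑ s : Fin 2 → X, α s * f (s 1) = - d t := by
      rw [sum_pairs (fun s => α s * f (s 1))]
      simp only [Matrix.cons_val_one, Matrix.head_cons, Matrix.cons_val_zero]
      rw [Finset.sum_comm]
      have step : ∀ y : X, ∑ x : X, α ![x, y] * f y
          = (if y = t 1 then f y else 0) - (if y = t 0 then f y else 0) := by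
        intro y
        rw [← Finset.sum_mul]
        have hbdry : ∑ x : X, α ![x, y] = ∑ x : X, unitChain t ![x, y] := by
          have h1 : ∑ x : X, α ![x, y] = bdry α ![y] := rfl
          have h2 : ∑ x : X, unitChain t ![x, y] = bdry (unitChain t) ![y] := rfl
          rw [h1, h2, hb]
        rw [hbdry, bdry_unitChain_eval]
        split_ifs <;> ring
      rw [Finset.sum_congr rfl (fun y _ => step y), Finset.sum_sub_distrib,
        Finset.sum_ite_eq' Finset.univ (t 1) f, Finset.sum_ite_eq' Finset.univ (t 0) f]
      simp [hft1, hft0]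
    have hT0 : ∑ s : Fin 2 → X, α s * f (s 0) = d t := by
      let e : (Fin 2 → X) ≃ (Fin 2 → X) :=
        { toFun := fun s => s ∘ (Equiv.swap 0 1 : Equiv.Perm (Fin 2))
          invFun := fun s => s ∘ (Equiv.swap 0 1 : Equiv.Perm (Fin 2))
          left_inv := fun s => by funext i; simp [Equiv.swap_apply_self]
          right_inv := fun s => by funext i; simp [Equiv.swap_apply_self] }
      have hre : ∑ s : Fin 2 → X, α s * f (s 0)
          = ∑ s : Fin 2 → X, α (s ∘ (Equiv.swap 0 1 : Equiv.Perm (Fin 2)))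
              * f ((s ∘ (Equiv.swap 0 1 : Equiv.Perm (Fin 2))) 0) :=
        (Fintype.sum_equiv e _ _ (fun s => rfl)).symm
      rw [hre]
      have hterm : ∀ s : Fin 2 → X,
          α (s ∘ (Equiv.swap 0 1 : Equiv.Perm (Fin 2)))
            * f ((s ∘ (Equiv.swap 0 1 : Equiv.Perm (Fin 2))) 0)
          = - (α s * f (s 1)) := by
        intro s
        have h1 : α (s ∘ (Equiv.swap 0 1 : Equiv.Perm (Fin 2))) = - α s := by
          rw [hα (Equiv.swap 0 1) s, Equiv.Perm.sign_swap (by decide : (0:Fin 2) ≠ 1)]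
          norm_num
        have h2 : (s ∘ (Equiv.swap 0 1 : Equiv.Perm (Fin 2))) 0 = s 1 := by simp
        rw [h1, h2]; ring
      rw [Finset.sum_congr rfl (fun s _ => hterm s), Finset.sum_neg_distrib, hT1]
      ring
    have hfact : ((1 + 1).factorial : ℝ) = 2 := by norm_num [Nat.factorial]
    rw [hfact]
    calc (2 : ℝ) * d t = ∑ s : Fin 2 → X, α s * (f (s 0) - f (s 1)) := by
          rw [Finset.sum_congr rfl (fun s _ => mul_sub (α s) (f (s 0)) (f (s 1))),
            Finset.sum_sub_distrib, hT0, hT1]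
          ring
      _ ≤ ∑ s : Fin 2 → X, |α s| * d s := by
          refine Finset.sum_le_sum (fun s _ => ?_)
          calc α s * (f (s 0) - f (s 1)) ≤ |α s * (f (s 0) - f (s 1))| := le_abs_self _
            _ = |α s| * |f (s 0) - f (s 1)| := abs_mul _ _
            _ ≤ |α s| * d s := mul_le_mul_of_nonneg_left (lip s) (abs_nonneg _)
  · intro hd
    refine ⟨hd.nonneg, hd.eq_zero, hd.perm, ?_⟩
    intro x y
    rw [Fin.sum_univ_two]
    by_cases hinj : Function.Injective x
    · have hab : x 0 ≠ x 1 := fun h => (by decide : (0 : Fin 2) ≠ 1) (hinj h)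
      have hu0 : Function.update x 0 y = ![y, x 1] := by
        funext i; fin_cases i <;> simp
      have hu1 : Function.update x 1 y = ![x 0, y] := by
        funext i; fin_cases i <;> simp
      rw [hu0, hu1]
      by_cases hy0 : y = x 0
      · have e1 : d ![y, x 1] = d x := by
          rw [hy0]; exact (congrArg d (eta2 x)).symm
        have e2 : (0:ℝ) ≤ d ![x 0, y] := hd.nonneg _
        linarith
      · by_cases hy1 : y = x 1
        · have e1 : d ![x 0, y] = d x := by
            rw [hy1]; exact (congrArg d (eta2 x)).symm
          have e2 : (0:ℝ) ≤ d ![y, x 1] := hd.nonneg _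
          linarith
        · set α : (Fin 2 → X) → ℝ :=
            fun s => unitChain ![x 0, y] s + unitChain ![y, x 1] s with hαdef
          have halt : AltChain α := by
            intro π s
            show unitChain ![x 0, y] (s ∘ π) + unitChain ![y, x 1] (s ∘ π) = _
            rw [altChain_unitChain ![x 0, y] π s, altChain_unitChain ![y, x 1] π s]
            ring
          have hbd : bdry α = bdry (unitChain x) := by
            funext z
            show ∑ w : X, α (Fin.cons w z) = ∑ w : X, unitChain x (Fin.cons w z)
            calc ∑ w : X, α (Fin.cons w z)
                = ∑ w : X, (unitChain ![x 0, y] ![w, z 0]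
                    + unitChain ![y, x 1] ![w, z 0]) := by
                  refine Finset.sum_congr rfl (fun w _ => ?_)
                  rw [hαdef, cons_pair w z]
              _ = (∑ w : X, unitChain ![x 0, y] ![w, z 0])
                  + ∑ w : X, unitChain ![y, x 1] ![w, z 0] := Finset.sum_add_distrib
              _ = (if z 0 = x 1 then (1:ℝ) else 0) - (if z 0 = x 0 then 1 else 0) := by
                  rw [bdry_unitChain_pair, bdry_unitChain_pair]
                  ring
              _ = ∑ w : X, unitChain x ![w, z 0] := (bdry_unitChain_eval x (z 0)).symm
              _ = ∑ w : X, unitChain x (Fin.cons w z) :=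
                  Finset.sum_congr rfl (fun w _ => by rw [cons_pair w z])
          have hstrong := hd.strong_simplex x hinj α halt hbd
          have hfact : ((1 + 1).factorial : ℝ) = 2 := by norm_num [Nat.factorial]
          rw [hfact] at hstrong
          have hsum : ∑ s : Fin (1 + 1) → X, |α s| * d s
              ≤ 2 * d ![x 0, y] + 2 * d ![y, x 1] := by
            have hi1 : Function.Injective (![x 0, y] : Fin 2 → X) :=
              pair_inj (fun h => hy0 h.symm)
            have hi2 : Function.Injective (![y, x 1] : Fin 2 → X) := pair_inj hy1
            calc ∑ s : Fin (1 + 1) → X, |α s| * d s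
                ≤ ∑ s : Fin 2 → X,
                    (|unitChain ![x 0, y] s| * d s + |unitChain ![y, x 1] s| * d s) := by
                  refine Finset.sum_le_sum (fun s _ => ?_)
                  rw [← add_mul]
                  exact mul_le_mul_of_nonneg_right (abs_add_le _ _) (hd.nonneg s)
              _ = (∑ s : Fin 2 → X, |unitChain ![x 0, y] s| * d s)
                  + ∑ s : Fin 2 → X, |unitChain ![y, x 1] s| * d s :=
                  Finset.sum_add_distrib
              _ = 2 * d ![x 0, y] + 2 * d ![y, x 1] := by
                  rw [sum_abs_unitChain hd.perm _ hi1, sum_abs_unitChain hd.perm _ hi2]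
          linarith
    · rw [hd.eq_zero x hinj]
      exact add_nonneg (hd.nonneg _) (hd.nonneg _)
end

section
/- Let k ≥ 2 and m ≥ 1 be integers, let ‖·‖ be any norm on ℝ^m, let (X, d) be a pseudo k-metric space, and let (X′, d′) be the apex extension of (X, d) with apex a ∉ X. Then (X′, d′) ∈ C_{k+1,‖·‖}^m if and only if (X, d) ∈ C_{k,‖·‖}^m. -/
open scoped BigOperators

section Aux

open Equiv Equiv.Perm

variable {Y : Type*} {X : Type*}

lemma altChain_zero_of_not_injective {j : ℕ} {α : (Fin j → Y) → ℝ}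
    (hα : AltChain α) {x : Fin j → Y} (hx : ¬ Function.Injective x) : α x = 0 := by
  simp only [Function.Injective, not_forall] at hx
  obtain ⟨a, b, hab, hne⟩ := hx
  have hxs : x ∘ ⇑(Equiv.swap a b) = x := by
    funext t
    rcases eq_or_ne t a with rfl | ha
    · simp [Equiv.swap_apply_left, hab]
    rcases eq_or_ne t b with rfl | hb
    · simp [Equiv.swap_apply_right, hab]
    · simp [Equiv.swap_apply_of_ne_of_ne ha hb]
  have := hα (Equiv.swap a b) x
  rw [hxs, Equiv.Perm.sign_swap hne] at this
  simp at this
  linarith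

lemma altChain_sub {j : ℕ} {α β : (Fin j → Y) → ℝ} (hα : AltChain α) (hβ : AltChain β) :
    AltChain (fun x => α x - β x) := by
  intro π x
  dsimp only
  rw [hα π x, hβ π x]; ring

lemma altChain_const_mul {j : ℕ} {α : (Fin j → Y) → ℝ} (c : ℝ) (hα : AltChain α) :
    AltChain (fun x => c * α x) := by
  intro π x
  dsimp only
  rw [hα π x]; ring

lemma altChain_comp {j : ℕ} {α : (Fin j → Y) → ℝ} (hα : AltChain α) (T : X → Y) :
    AltChain (fun u : Fin j → X => α (fun l => T (u l))) := by
  intro π u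
  exact hα π (fun l => T (u l))

end Aux
section PermMachinery

open Equiv Equiv.Perm

variable {Y : Type*} {X : Type*}

/-- Lift a permutation of `Fin n` to one of `Fin (n+1)` fixing `0`. -/
noncomputable def liftPerm {n : ℕ} (σ : Perm (Fin n)) : Perm (Fin (n + 1)) :=
  Equiv.Perm.decomposeFin.symm (0, σ)

@[simp] lemma liftPerm_zero {n : ℕ} (σ : Perm (Fin n)) : liftPerm σ 0 = 0 := by
  simp [liftPerm]

@[simp] lemma liftPerm_succ {n : ℕ} (σ : Perm (Fin n)) (l : Fin n) :
    liftPerm σ l.succ = (σ l).succ := by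
  simp [liftPerm]

@[simp] lemma sign_liftPerm {n : ℕ} (σ : Perm (Fin n)) :
    Equiv.Perm.sign (liftPerm σ) = Equiv.Perm.sign σ := by
  simp [liftPerm]

lemma liftPerm_comp_succ {n : ℕ} (σ : Perm (Fin n)) :
    ⇑(liftPerm σ) ∘ Fin.succ = Fin.succ ∘ ⇑σ := by
  funext l; simp

lemma inv_cycleRange_comp_succ {n : ℕ} (i : Fin (n + 1)) :
    ⇑(i.cycleRange)⁻¹ ∘ Fin.succ = i.succAbove := by
  funext j
  apply Equiv.injective i.cycleRange
  show i.cycleRange (i.cycleRange⁻¹ j.succ) = _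
  rw [Equiv.Perm.inv_def, Equiv.apply_symm_apply, Fin.cycleRange_succAbove]

/-- The parametrization of `Perm (Fin (n+1))` by a value at a marked point and a
permutation of the rest. -/
noncomputable def permEquiv (n : ℕ) : (Fin (n + 1) × Perm (Fin n)) ≃ Perm (Fin (n + 1)) where
  toFun p := (p.1.cycleRange)⁻¹ * liftPerm p.2
  invFun ρ := (ρ 0, (Equiv.Perm.decomposeFin ((ρ 0).cycleRange * ρ)).2)
  left_inv p := by
    obtain ⟨i, σ⟩ := p
    have h1 : ((i.cycleRange)⁻¹ * liftPerm σ) 0 = i := by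
      rw [Equiv.Perm.mul_apply, liftPerm_zero, ← Fin.cycleRange_self i,
        Equiv.Perm.inv_def, Equiv.symm_apply_apply]
    refine Prod.ext h1 ?_
    show (Equiv.Perm.decomposeFin ((((i.cycleRange)⁻¹ * liftPerm σ) 0).cycleRange *
      ((i.cycleRange)⁻¹ * liftPerm σ))).2 = σ
    rw [h1, mul_inv_cancel_left]
    rw [show (liftPerm σ : Perm (Fin (n+1))) = Equiv.Perm.decomposeFin.symm (0, σ) from rfl,
      Equiv.apply_symm_apply]
  right_inv ρ := by
    set τ := (ρ 0).cycleRange * ρ with hτ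
    have h2 : Equiv.Perm.decomposeFin.symm (Equiv.Perm.decomposeFin τ) = τ :=
      Equiv.symm_apply_apply _ _
    have h0 : (Equiv.Perm.decomposeFin τ).1 = 0 := by
      have h3 := Equiv.Perm.decomposeFin_symm_apply_zero
        (Equiv.Perm.decomposeFin τ).1 (Equiv.Perm.decomposeFin τ).2
      rw [Prod.mk.eta, h2] at h3
      rw [← h3, hτ, Equiv.Perm.mul_apply, Fin.cycleRange_self]
    show ((ρ 0).cycleRange)⁻¹ * liftPerm (Equiv.Perm.decomposeFin τ).2 = ρ
    have h4 : liftPerm (Equiv.Perm.decomposeFin τ).2 = τ := by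
      rw [liftPerm, ← h0, Prod.mk.eta]; exact h2
    rw [h4, hτ, inv_mul_cancel_left]

@[simp] lemma permEquiv_apply {n : ℕ} (p : Fin (n + 1) × Perm (Fin n)) :
    permEquiv n p = (p.1.cycleRange)⁻¹ * liftPerm p.2 := rfl

lemma sign_permEquiv {n : ℕ} (p : Fin (n + 1) × Perm (Fin n)) :
    ((Equiv.Perm.sign (permEquiv n p) : ℤ) : ℝ)
      = (-1 : ℝ) ^ (p.1 : ℕ) * ((Equiv.Perm.sign p.2 : ℤ) : ℝ) := by
  rw [permEquiv_apply, Equiv.Perm.sign_mul, Equiv.Perm.sign_inv, Fin.sign_cycleRange,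
    sign_liftPerm]
  push_cast
  ring

end PermMachinery
section PermSum

open Equiv Equiv.Perm

variable {Y : Type*} {X : Type*}

lemma comp_perm_comp {n : ℕ} (x : Fin n → Y) (π ρ : Perm (Fin n)) :
    (x ∘ ⇑π) ∘ ⇑ρ = x ∘ ⇑(π * ρ) := rfl

lemma sign_mul_self_cast {n : ℕ} (π : Perm (Fin n)) :
    ((Equiv.Perm.sign π : ℤ) : ℝ) * ((Equiv.Perm.sign π : ℤ) : ℝ) = 1 := by
  have h := Int.units_mul_self (Equiv.Perm.sign π)
  have h2 : ((Equiv.Perm.sign π : ℤ) : ℝ) * ((Equiv.Perm.sign π : ℤ) : ℝ)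
      = (((Equiv.Perm.sign π * Equiv.Perm.sign π : ℤˣ) : ℤ) : ℝ) := by push_cast; ring
  rw [h2, h]; norm_num

lemma altChain_permSum {n : ℕ} (H : (Fin n → Y) → ℝ) :
    AltChain (fun z => ∑ ρ : Perm (Fin n), ((Equiv.Perm.sign ρ : ℤ) : ℝ) * H (z ∘ ⇑ρ)) := by
  intro π x
  dsimp only
  rw [Finset.mul_sum]
  refine Fintype.sum_equiv (Equiv.mulLeft π) _ _ ?_
  intro ρ
  rw [comp_perm_comp]
  show _ = ((sign π : ℤ) : ℝ) * (((sign (π * ρ) : ℤ) : ℝ) * H (x ∘ ⇑(π * ρ)))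
  rw [Equiv.Perm.sign_mul]
  push_cast
  rw [← mul_assoc, ← mul_assoc, sign_mul_self_cast]
  ring

lemma permSum_eq {n : ℕ} (H : (Fin (n + 1) → Y) → ℝ)
    (hH : ∀ (σ : Perm (Fin n)) (z : Fin (n + 1) → Y),
      H (z ∘ ⇑(liftPerm σ)) = ((Equiv.Perm.sign σ : ℤ) : ℝ) * H z)
    (z : Fin (n + 1) → Y) :
    ∑ ρ : Perm (Fin (n + 1)), ((Equiv.Perm.sign ρ : ℤ) : ℝ) * H (z ∘ ⇑ρ)
      = (n.factorial : ℝ) * ∑ l : Fin (n + 1), (-1 : ℝ) ^ (l : ℕ) * H (z ∘ ⇑(l.cycleRange)⁻¹) := by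
  rw [← Fintype.sum_equiv (permEquiv n)
    (fun p => ((Equiv.Perm.sign (permEquiv n p) : ℤ) : ℝ) * H (z ∘ ⇑(permEquiv n p)))
    (fun ρ => ((Equiv.Perm.sign ρ : ℤ) : ℝ) * H (z ∘ ⇑ρ)) (fun p => rfl)]
  rw [Fintype.sum_prod_type]
  have key : ∀ (l : Fin (n + 1)) (σ : Perm (Fin n)),
      ((Equiv.Perm.sign (permEquiv n (l, σ)) : ℤ) : ℝ) * H (z ∘ ⇑(permEquiv n (l, σ)))
        = (-1 : ℝ) ^ (l : ℕ) * H (z ∘ ⇑(l.cycleRange)⁻¹) := by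
    intro l σ
    have hcomp : z ∘ ⇑(permEquiv n (l, σ)) = (z ∘ ⇑(l.cycleRange)⁻¹) ∘ ⇑(liftPerm σ) := rfl
    rw [hcomp, hH σ, sign_permEquiv]
    show (-1 : ℝ) ^ (l : ℕ) * ((sign σ : ℤ) : ℝ) * (((sign σ : ℤ) : ℝ) * _) = _
    rw [mul_assoc, ← mul_assoc ((sign σ : ℤ) : ℝ), sign_mul_self_cast, one_mul]
  calc ∑ l : Fin (n + 1), ∑ σ : Perm (Fin n),
        ((Equiv.Perm.sign (permEquiv n (l, σ)) : ℤ) : ℝ) * H (z ∘ ⇑(permEquiv n (l, σ)))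
      = ∑ l : Fin (n + 1), ∑ _σ : Perm (Fin n),
          (-1 : ℝ) ^ (l : ℕ) * H (z ∘ ⇑(l.cycleRange)⁻¹) := by
        refine Finset.sum_congr rfl fun l _ => Finset.sum_congr rfl fun σ _ => key l σ
    _ = (n.factorial : ℝ) * ∑ l : Fin (n + 1), (-1 : ℝ) ^ (l : ℕ) * H (z ∘ ⇑(l.cycleRange)⁻¹) := by
        rw [Finset.mul_sum]
        refine Finset.sum_congr rfl fun l _ => ?_
        rw [Finset.sum_const, Finset.card_univ, Fintype.card_perm, Fintype.card_fin,
          nsmul_eq_mul]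

lemma cobdry_eq_cycleSum {n : ℕ} (f : (Fin (n + 1) → Y) → ℝ) (x : Fin (n + 2) → Y) :
    cobdry f x = ∑ l : Fin (n + 2), (-1 : ℝ) ^ (l : ℕ) * f ((x ∘ ⇑(l.cycleRange)⁻¹) ∘ Fin.succ) := by
  refine Finset.sum_congr rfl fun l _ => ?_
  rw [Function.comp_assoc, inv_cycleRange_comp_succ]

lemma altChain_cobdry {n : ℕ} {f : (Fin (n + 1) → Y) → ℝ} (hf : AltChain f) :
    AltChain (cobdry f) := by
  have hH : ∀ (σ : Perm (Fin (n + 1))) (z : Fin (n + 2) → Y),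
      (fun z : Fin (n + 2) → Y => f (z ∘ Fin.succ)) (z ∘ ⇑(liftPerm σ))
        = ((Equiv.Perm.sign σ : ℤ) : ℝ) * (fun z : Fin (n + 2) → Y => f (z ∘ Fin.succ)) z := by
    intro σ z
    dsimp only
    rw [Function.comp_assoc, liftPerm_comp_succ, ← Function.comp_assoc, hf σ]
  have heq : cobdry f = fun x : Fin (n + 2) → Y => (((n + 1).factorial : ℝ))⁻¹ *
      ∑ ρ : Perm (Fin (n + 2)), ((Equiv.Perm.sign ρ : ℤ) : ℝ) *
        (fun z : Fin (n + 2) → Y => f (z ∘ Fin.succ)) (x ∘ ⇑ρ) := by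
    funext x
    have h1 := permSum_eq (fun z : Fin (n + 2) → Y => f (z ∘ Fin.succ)) hH x
    rw [h1, ← mul_assoc, inv_mul_cancel₀ (by positivity), one_mul, cobdry_eq_cycleSum]
  rw [heq]
  exact altChain_const_mul _ (altChain_permSum (fun z : Fin (n + 2) → Y => f (z ∘ Fin.succ)))

end PermSum
section DeltaDelta

open Equiv

variable {Y : Type*}

lemma succAbove_val {n : ℕ} (p : Fin (n + 1)) (i : Fin n) :
    ((p.succAbove i : Fin (n + 1)) : ℕ) = if (i : ℕ) < (p : ℕ) then (i : ℕ) else (i : ℕ) + 1 := by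
  rcases Nat.lt_or_ge (i : ℕ) (p : ℕ) with h | h
  · rw [Fin.succAbove_of_castSucc_lt _ _ (by simpa [Fin.lt_def] using h), if_pos h,
      Fin.coe_castSucc]
  · rw [Fin.succAbove_of_le_castSucc _ _ (by simpa [Fin.le_def] using h), if_neg (by omega),
      Fin.val_succ]

/-- The index of `l` in the complement of `l.succAbove i`. -/
noncomputable def partnerIdx {n : ℕ} (l : Fin (n + 1)) (i : Fin n) : Fin n :=
  (Fin.exists_succAbove_eq (Fin.succAbove_ne l i).symm).choose

lemma partnerIdx_spec {n : ℕ} (l : Fin (n + 1)) (i : Fin n) :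
    (l.succAbove i).succAbove (partnerIdx l i) = l :=
  (Fin.exists_succAbove_eq (Fin.succAbove_ne l i).symm).choose_spec

lemma key_map {n : ℕ} (l : Fin (n + 3)) (i j : Fin (n + 2))
    (hj : (l.succAbove i).succAbove j = l) (t : Fin (n + 1)) :
    l.succAbove (i.succAbove t) = (l.succAbove i).succAbove (j.succAbove t) := by
  have h1 := congrArg (Fin.val) hj
  simp only [succAbove_val] at h1
  apply Fin.ext
  simp only [succAbove_val]
  split_ifs at h1 ⊢ <;> omega

lemma key_sign {n : ℕ} (l : Fin (n + 3)) (i j : Fin (n + 2))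
    (hj : (l.succAbove i).succAbove j = l) :
    (-1 : ℝ) ^ ((l : ℕ) + (i : ℕ)) + (-1 : ℝ) ^ (((l.succAbove i) : ℕ) + (j : ℕ)) = 0 := by
  have h1 := congrArg (Fin.val) hj
  simp only [succAbove_val] at h1
  have hpar : ((l : ℕ) + (i : ℕ)) + 1 = ((l.succAbove i : ℕ) + (j : ℕ))
      ∨ ((l.succAbove i : ℕ) + (j : ℕ)) + 1 = ((l : ℕ) + (i : ℕ)) := by
    simp only [succAbove_val]
    split_ifs at h1 ⊢ <;> omega
  rcases hpar with h | h
  · rw [← h, pow_succ]; ring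
  · rw [← h, pow_succ]; ring

lemma cobdry_cobdry {n : ℕ} (f : (Fin (n + 1) → Y) → ℝ) (x : Fin (n + 3) → Y) :
    cobdry (cobdry f) x = 0 := by
  have hexp : cobdry (cobdry f) x = ∑ p : Fin (n + 3) × Fin (n + 2),
      (-1 : ℝ) ^ ((p.1 : ℕ) + (p.2 : ℕ)) * f ((x ∘ p.1.succAbove) ∘ p.2.succAbove) := by
    rw [Fintype.sum_prod_type]
    refine Finset.sum_congr rfl fun l _ => ?_
    show (-1 : ℝ) ^ (l : ℕ) * ∑ i : Fin (n + 2), (-1 : ℝ) ^ (i : ℕ)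
        * f ((x ∘ l.succAbove) ∘ i.succAbove) = _
    rw [Finset.mul_sum]
    refine Finset.sum_congr rfl fun i _ => ?_
    rw [pow_add]; ring
  rw [hexp]
  refine Finset.sum_ninvolution
    (fun p => (p.1.succAbove p.2, partnerIdx p.1 p.2)) ?_ ?_ (fun _ => Finset.mem_univ _) ?_
  · intro p
    obtain ⟨l, i⟩ := p
    dsimp only
    have hspec := partnerIdx_spec l i
    have hmap : (x ∘ l.succAbove) ∘ i.succAbove
        = (x ∘ (l.succAbove i).succAbove) ∘ (partnerIdx l i).succAbove := by
      funext t
      exact congrArg x (key_map l i (partnerIdx l i) hspec t)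
    rw [← hmap, ← add_mul, key_sign l i (partnerIdx l i) hspec, zero_mul]
  · intro p _
    obtain ⟨l, i⟩ := p
    intro hcon
    exact Fin.succAbove_ne l i (congrArg Prod.fst hcon)
  · intro p
    obtain ⟨l, i⟩ := p
    dsimp only
    have hspec := partnerIdx_spec l i
    refine Prod.ext hspec ?_
    show partnerIdx (l.succAbove i) (partnerIdx l i) = i
    apply Fin.succAbove_right_injective (p := l)
    have h2 := partnerIdx_spec (l.succAbove i) (partnerIdx l i)
    rw [hspec] at h2
    rw [h2]


end DeltaDelta
section ConsExt

open Equiv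

variable {Y : Type*} {X : Type*}

lemma cons_comp_succ {n : ℕ} (a : Y) (w : Fin n → Y) : Fin.cons a w ∘ Fin.succ = w := by
  funext t; simp

lemma cons_comp_succAbove {n : ℕ} (a : Y) (w : Fin (n + 1) → Y) (i : Fin (n + 1)) :
    Fin.cons a w ∘ (Fin.succ i).succAbove = Fin.cons a (w ∘ i.succAbove) := by
  funext t
  refine Fin.cases ?_ (fun s => ?_) t
  · simp
  · simp [Fin.succ_succAbove_succ]

/-- `δβ(a, w) = β w - δ(β(a, ·))(w)`. -/
lemma cobdry_cons {j : ℕ} (β : (Fin (j + 2) → Y) → ℝ) (a : Y) (w : Fin (j + 2) → Y) :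
    cobdry β (Fin.cons a w) = β w - cobdry (fun u => β (Fin.cons a u)) w := by
  show ∑ i : Fin (j + 3), (-1 : ℝ) ^ (i : ℕ) * β (Fin.cons a w ∘ i.succAbove) = _
  rw [Fin.sum_univ_succ]
  have h0 : Fin.cons a w ∘ (0 : Fin (j + 3)).succAbove = w := by
    rw [Fin.succAbove_zero, cons_comp_succ]
  rw [h0]
  have hterm : ∀ i : Fin (j + 2), (-1 : ℝ) ^ ((Fin.succ i : Fin (j + 3)) : ℕ)
      * β (Fin.cons a w ∘ (Fin.succ i).succAbove)
      = -((-1 : ℝ) ^ (i : ℕ) * β (Fin.cons a (w ∘ i.succAbove))) := by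
    intro i
    rw [cons_comp_succAbove, Fin.val_succ, pow_succ]
    ring
  rw [Finset.sum_congr rfl fun i _ => hterm i, Finset.sum_neg_distrib]
  show (-1 : ℝ) ^ ((0 : Fin (j + 3)) : ℕ) * β w + _ = _
  simp only [Fin.val_zero, pow_zero, one_mul]
  rfl

lemma altChain_cons {j : ℕ} {β : (Fin (j + 1) → Y) → ℝ} (hβ : AltChain β) (a : Y) :
    AltChain (fun u : Fin j → Y => β (Fin.cons a u)) := by
  intro π u
  dsimp only
  have hc : Fin.cons a (u ∘ ⇑π) = (Fin.cons a u) ∘ ⇑(liftPerm π) := by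
    funext t
    refine Fin.cases ?_ (fun s => ?_) t
    · simp
    · simp
  rw [hc, hβ (liftPerm π), sign_liftPerm]

lemma cobdry_sub {j : ℕ} (p q : (Fin (j + 1) → Y) → ℝ) (w : Fin (j + 2) → Y) :
    cobdry (fun u => p u - q u) w = cobdry p w - cobdry q w := by
  simp only [cobdry]
  rw [← Finset.sum_sub_distrib]
  refine Finset.sum_congr rfl fun i _ => ?_
  ring

lemma cobdry_precomp {j : ℕ} (β : (Fin (j + 1) → Y) → ℝ) (T : X → Y) (x : Fin (j + 2) → X) :
    cobdry (fun u => β (fun l => T (u l))) x = cobdry β (fun l => T (x l)) := rfl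

/-- Extension by zero of a chain on `X` to a chain on `Option X`. -/
noncomputable def extO {n : ℕ} (f : (Fin n → X) → ℝ) : (Fin n → Option X) → ℝ :=
  fun z => if h : ∀ l, (z l).isSome then f (fun l => (z l).get (h l)) else 0

lemma extO_some {n : ℕ} (f : (Fin n → X) → ℝ) (v : Fin n → X) :
    extO f (fun l => some (v l)) = f v := by
  simp [extO]

lemma extO_none {n : ℕ} (f : (Fin n → X) → ℝ) (z : Fin n → Option X)
    (hz : ∃ l, z l = none) : extO f z = 0 := by
  rw [extO, dif_neg]
  intro h
  obtain ⟨l, hl⟩ := hz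
  have := h l
  rw [hl] at this
  simp at this

lemma altChain_extO {n : ℕ} {f : (Fin n → X) → ℝ} (hf : AltChain f) :
    AltChain (extO f) := by
  intro π z
  by_cases h : ∀ l, (z l).isSome
  · have h' : ∀ l, ((z ∘ ⇑π) l).isSome := fun l => h (π l)
    rw [extO, dif_pos h', extO, dif_pos h]
    exact hf π (fun l => (z l).get (h l))
  · have h' : ¬ ∀ l, ((z ∘ ⇑π) l).isSome := by
      intro h2
      exact h fun l => by
        have := h2 (π.symm l)
        simpa using this
    rw [extO, dif_neg h', extO, dif_neg h, mul_zero]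

end ConsExt
section ApexLemmas

variable {X : Type*}

lemma apexExt_eq {K : ℕ} (d : (Fin K → X) → ℝ) (x : Fin (K + 1) → Option X)
    (hinj : Function.Injective x) (i₀ : Fin (K + 1)) (h0 : x i₀ = none)
    (w : Fin K → X) (hw : ∀ j, x (i₀.succAbove j) = some (w j)) :
    apexExt d x = d w := by
  have h : Function.Injective x ∧ ∃ i, x i = none := ⟨hinj, i₀, h0⟩
  rw [apexExt, dif_pos h]
  have hc : Classical.choose h.2 = i₀ := hinj ((Classical.choose_spec h.2).trans h0.symm)
  apply congrArg d
  funext j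
  apply Option.some_injective
  rw [Option.some_get, hc, hw j]

lemma apexExt_of_not_injective {K : ℕ} (d : (Fin K → X) → ℝ) (x : Fin (K + 1) → Option X)
    (hx : ¬ Function.Injective x) : apexExt d x = 0 := by
  rw [apexExt, dif_neg (fun h => hx h.1)]

lemma apexExt_of_no_none {K : ℕ} (d : (Fin K → X) → ℝ) (x : Fin (K + 1) → Option X)
    (hx : ¬ ∃ i, x i = none) : apexExt d x = 0 := by
  rw [apexExt, dif_neg (fun h => hx h.2)]

end ApexLemmas
/-- for `k ≥ 2` (arity `k + 2`), `m ≥ 1` and any norm `ν` on `ℝ^m`,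
if `(X, d)` is a pseudo metric, then its apex extension is a coboundary metric of
arity `k + 3` in `m` dimensions w.r.t. `ν` iff `(X, d)` is a coboundary metric of
arity `k + 2` in `m` dimensions w.r.t. `ν`. -/
theorem stmt_5 (k m : ℕ) (hm : 1 ≤ m) (ν : (Fin m → ℝ) → ℝ) (hν : IsNorm ν)
    {X : Type*} [Fintype X] (d : (Fin (k + 2) → X) → ℝ)
    (hd : IsPseudoMetric (k + 2) d) :
    IsCoboundaryMetric (k + 1) m ν (apexExt d) ↔ IsCoboundaryMetric k m ν d := by
  constructor
  · rintro ⟨g, hgalt, hginj, _⟩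
    by_cases hX : Nonempty X
    · obtain ⟨b⟩ := hX
      refine ⟨fun i => fun u : Fin (k + 1) → X =>
        g i (Fin.cons (some b) (fun l => some (u l)))
          - g i (Fin.cons none (fun l => some (u l))), ?_, ?_, ?_⟩
      · intro i
        exact altChain_sub
          (altChain_comp (altChain_cons (hgalt i) (some b)) some)
          (altChain_comp (altChain_cons (hgalt i) none) some)
      · intro w hwinj
        have hx1 : Function.Injective (Fin.cons none (fun l => some (w l)) :
            Fin (k + 3) → Option X) := by
          rw [Fin.cons_injective_iff]
          constructor
          · rintro ⟨l, hl⟩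
            simp at hl
          · exact fun a c hac => hwinj (by simpa using hac)
        have e1 : apexExt d (Fin.cons none (fun l => some (w l))) = d w := by
          refine apexExt_eq d _ hx1 0 (by simp) w fun j => ?_
          rw [Fin.succAbove_zero, Fin.cons_succ]
        have e2 : ∀ i, cobdry (g i) (Fin.cons none (fun l => some (w l)))
            = cobdry (fun u : Fin (k + 1) → X =>
                g i (Fin.cons (some b) (fun l => some (u l)))
                  - g i (Fin.cons none (fun l => some (u l)))) w := by
          intro i
          rw [cobdry_cons]
          have h3 : cobdry (fun u : Fin (k + 1) → Option X => g i (Fin.cons none u))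
                (fun l => some (w l))
              = cobdry (fun u : Fin (k + 1) → X =>
                  g i (Fin.cons none (fun l => some (u l)))) w :=
            (cobdry_precomp (fun u : Fin (k + 1) → Option X => g i (Fin.cons none u)) some w).symm
          rw [h3, cobdry_sub]
          set cw : Fin (k + 3) → X := Fin.cons b w with hcw
          have h6 : cobdry (g i) (fun l => some (cw l)) = 0 := by
            by_cases hcinj : Function.Injective (fun l => some (cw l) :
                Fin (k + 3) → Option X)
            · have hz := hginj _ hcinj
              rw [apexExt_of_no_none d _ (by rintro ⟨t, ht⟩; simp at ht)] at hz
              exact congrFun ((hν.eq_zero_iff _).mp hz.symm) i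
            · exact altChain_zero_of_not_injective (altChain_cobdry (hgalt i)) hcinj
          have h4 := cobdry_cons (fun v : Fin (k + 2) → X => g i (fun l => some (v l))) b w
          rw [← hcw] at h4
          have h5 : (fun u : Fin (k + 1) → X => g i (fun l : Fin (k + 2) => some ((Fin.cons b u : Fin (k + 2) → X) l)))
              = (fun u : Fin (k + 1) → X =>
                  g i (Fin.cons (some b) (fun l => some (u l)))) := by
            funext u
            congr 1
            funext l
            refine Fin.cases ?_ (fun s => ?_) l <;> simp
          have h7 : cobdry (fun v : Fin (k + 2) → X => g i (fun l => some (v l))) cw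
              = cobdry (g i) (fun l => some (cw l)) :=
            cobdry_precomp (g i) some cw
          rw [h5, h7, h6] at h4
          -- h4 : 0 = g i (fun l => some (w l)) - cobdry (fun u => g i (cons (some b) ...)) w
          have h8 : g i (fun l => some (w l))
              = cobdry (fun u : Fin (k + 1) → X =>
                  g i (Fin.cons (some b) (fun l => some (u l)))) w := by linarith
          rw [h8]
        have e3 := hginj _ hx1
        rw [e1] at e3
        rw [e3]
        congr 1
        funext i
        exact e2 i
      · exact fun x hx => hd.eq_zero x hx
    · refine ⟨fun _ => fun _ => 0, ?_, ?_, ?_⟩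
      · intro i π x
        simp
      · intro x _
        exact absurd ⟨x 0⟩ hX
      · intro x _
        exact absurd ⟨x 0⟩ hX
  · rintro ⟨f, hfalt, hfinj, _⟩
    refine ⟨fun i => extO (cobdry (f i)), fun i => altChain_extO (altChain_cobdry (hfalt i)),
      ?_, fun x hx => apexExt_of_not_injective d x hx⟩
    intro x hinjx
    by_cases hnone : ∃ i₀, x i₀ = none
    · obtain ⟨i₀, h0⟩ := hnone
      have hws : ∀ j : Fin (k + 2), (x (i₀.succAbove j)).isSome := by
        intro j
        rw [Option.isSome_iff_ne_none]
        intro hn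
        exact Fin.succAbove_ne i₀ j (hinjx (hn.trans h0.symm))
      set w : Fin (k + 2) → X := fun j => (x (i₀.succAbove j)).get (hws j) with hwdef
      have hw : ∀ j, x (i₀.succAbove j) = some (w j) := fun j => (Option.some_get (hws j)).symm
      have hwinj : Function.Injective w := by
        intro a c hac
        have hxe : x (i₀.succAbove a) = x (i₀.succAbove c) := by
          rw [hw a, hw c, hac]
        exact Fin.succAbove_right_injective (hinjx hxe)
      have hcomp : ∀ i, cobdry (extO (cobdry (f i))) x
          = (-1 : ℝ) ^ (i₀ : ℕ) * cobdry (f i) w := by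
        intro i
        show ∑ l : Fin (k + 3), (-1 : ℝ) ^ (l : ℕ) * extO (cobdry (f i)) (x ∘ l.succAbove) = _
        rw [Finset.sum_eq_single i₀]
        · have hxi : x ∘ i₀.succAbove = fun j => some (w j) := funext fun j => hw j
          rw [hxi, extO_some]
        · intro l _ hlne
          have hex : ∃ t, (x ∘ l.succAbove) t = none := by
            obtain ⟨t, ht⟩ := Fin.exists_succAbove_eq (Ne.symm hlne)
            exact ⟨t, by rw [Function.comp_apply, ht, h0]⟩
          rw [extO_none _ _ hex, mul_zero]
        · intro habs
          exact absurd (Finset.mem_univ i₀) habs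
      have hvec : (fun i => cobdry (extO (cobdry (f i))) x)
          = ((-1 : ℝ) ^ (i₀ : ℕ)) • (fun i => cobdry (f i) w) := by
        funext i
        simp [hcomp i]
      calc apexExt d x = d w := apexExt_eq d x hinjx i₀ h0 w hw
        _ = ν (fun i => cobdry (f i) w) := hfinj w hwinj
        _ = ν (((-1 : ℝ) ^ (i₀ : ℕ)) • fun i => cobdry (f i) w) := by
            rw [hν.homog, abs_pow, abs_neg, abs_one, one_pow, one_mul]
        _ = ν (fun i => cobdry (extO (cobdry (f i))) x) := by rw [hvec]
    · have hall : ∀ t, (x t).isSome := fun t =>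
        Option.isSome_iff_ne_none.mpr (fun hn => hnone ⟨t, hn⟩)
      set v : Fin (k + 3) → X := fun t => (x t).get (hall t) with hvdef
      have hxv : ∀ t, x t = some (v t) := fun t => (Option.some_get (hall t)).symm
      have hcomp : ∀ i, cobdry (extO (cobdry (f i))) x = 0 := by
        intro i
        show ∑ l : Fin (k + 3), (-1 : ℝ) ^ (l : ℕ) * extO (cobdry (f i)) (x ∘ l.succAbove) = 0
        have hterm : ∀ l : Fin (k + 3), extO (cobdry (f i)) (x ∘ l.succAbove)
            = cobdry (f i) (v ∘ l.succAbove) := by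
          intro l
          have hxl : x ∘ l.succAbove = fun j => some ((v ∘ l.succAbove) j) :=
            funext fun j => hxv (l.succAbove j)
          rw [hxl, extO_some]
        rw [Finset.sum_congr rfl fun l _ => by rw [hterm l]]
        exact cobdry_cobdry (f i) v
      rw [apexExt_of_no_none d x hnone,
        show (fun i => cobdry (extO (cobdry (f i))) x) = (0 : Fin m → ℝ) from
          funext fun i => hcomp i,
        (hν.eq_zero_iff 0).mpr rfl]
end
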